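/- Consider the network G with V_G = {r,s,t}, E_G = {(t,s),(s,r)}, edge costs c_E(t,s) = c_E(s,r) = 1, edge capacities u_E ≡ 10, and the request with root r, terminals T = {t}, Steiner sites S = {s}, root capacity u_r = 1, Steiner capacity u_S(s) = 10 and activation cost c_S(s) = 5. In the LP relaxation of IP-A-CVSAP (where x_s ∈ [0,1] and f : E_ext → ℝ_{≥0}) without the directed Steiner cuts (IP-3), the point with f(t,s) = 1, f(s,r) = 1/10, x_s = 1/10, f(o⁺,t) = 1, f(o⁺,s) = 1/10, f(s,o⁻_S) = 1, f(r,o⁻_r) = 1/10 is feasible and has cost C_IP = 1.6, whereas every point that is feasible for the LP relaxation including the directed Steiner cuts (IP-3) has cost C_IP ≥ 2. Hence the directed Steiner cuts strictly strengthen the LP relaxation of IP-A-CVSAP. -/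
import Mathlib


/-! Formalization of the Constrained Virtual Steiner Arborescence Problem (CVSAP),
its single-commodity flow IP formulation, and related notions. -/

/-- Vertices of the extended graph: original vertices plus super source `src`,
super sink `sinkS` for Steiner nodes and super sink `sinkR` for the root. -/
inductive ExtV (V : Type) where
  | orig : V → ExtV V
  | src : ExtV V
  | sinkS : ExtV V
  | sinkR : ExtV V
deriving DecidableEq

open ExtV

/-- A (finite) capacitated directed network. -/
structure Network (V : Type) [DecidableEq V] where
  E : Finset (V × V)
  uE : V × V → ℕ
  cE : V × V → ℝ

/-- A request `R = (root, S, T, u_r, c_S, u_S)`. -/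
structure Request (V : Type) [DecidableEq V] where
  root : V
  S : Finset V
  T : Finset V
  ur : ℕ
  cS : V → ℝ
  uS : V → ℕ

variable {V : Type} [DecidableEq V]

/-- Well-formedness: root is neither terminal nor Steiner site, Steiner sites and terminals
are disjoint, and all costs are positive. -/
def RequestWF (N : Network V) (R : Request V) : Prop :=
  R.root ∉ R.T ∧ R.root ∉ R.S ∧ Disjoint R.S R.T ∧
    (∀ s ∈ R.S, 0 < R.cS s) ∧ (∀ e ∈ N.E, 0 < N.cE e)

/-- Edge set of the extended graph `G_ext`. -/
def Eext (N : Network V) (R : Request V) : Finset (ExtV V × ExtV V) :=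
  (N.E.image fun e => (orig e.1, orig e.2)) ∪
    ({(orig R.root, sinkR)} : Finset (ExtV V × ExtV V)) ∪
    (R.S.image fun s => (orig s, sinkS)) ∪
    (R.S.image fun s => (src, orig s)) ∪
    (R.T.image fun t => (src, orig t))

/-- `E_R`: the extended edges without the edges into the Steiner super sink. -/
def ERext (N : Network V) (R : Request V) : Finset (ExtV V × ExtV V) :=
  (Eext N R).filter fun e => e.2 ≠ sinkS

/-- Edges of `F` leaving node `v`. -/
def outV (F : Finset (ExtV V × ExtV V)) (v : ExtV V) : Finset (ExtV V × ExtV V) :=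
  F.filter fun e => e.1 = v

/-- Edges of `F` entering node `v`. -/
def inV (F : Finset (ExtV V × ExtV V)) (v : ExtV V) : Finset (ExtV V × ExtV V) :=
  F.filter fun e => e.2 = v

/-- Edges of `F` leaving the node set `W`. -/
def outSet (F : Finset (ExtV V × ExtV V)) (W : Finset (ExtV V)) : Finset (ExtV V × ExtV V) :=
  F.filter fun e => e.1 ∈ W ∧ e.2 ∉ W

/-- Total flow of `f` on the edge set `F`. -/
def fSum (f : ExtV V × ExtV V → ℕ) (F : Finset (ExtV V × ExtV V)) : ℕ :=
  ∑ e ∈ F, f e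

/-- Embedding of a set of original nodes into the extended graph. -/
def extW (W : Finset V) : Finset (ExtV V) := W.image orig

/-- A walk in the support graph `G^f_ext`: consecutive nodes are joined by extended
edges carrying positive flow. -/
def IsSupportWalk (N : Network V) (R : Request V) (f : ExtV V × ExtV V → ℕ)
    (p : List (ExtV V)) : Prop :=
  p.Chain' fun a b => (a, b) ∈ Eext N R ∧ 1 ≤ f (a, b)

/-- (IP-1): flow conservation at all original nodes. -/
def IP1 (N : Network V) (R : Request V) (f : ExtV V × ExtV V → ℕ) : Prop :=
  ∀ v : V, fSum f (outV (Eext N R) (orig v)) = fSum f (inV (Eext N R) (orig v))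

/-- (IP-2): connectivity inequalities for activated Steiner sites. -/
def IP2 (N : Network V) (R : Request V) (x : V → ℕ) (f : ExtV V × ExtV V → ℕ) : Prop :=
  ∀ W : Finset V, ∀ s ∈ W, s ∈ R.S → x s ≤ fSum f (outSet (ERext N R) (extW W))

/-- (IP-3): directed Steiner cuts for terminals. -/
def IP3 (N : Network V) (R : Request V) (f : ExtV V × ExtV V → ℕ) : Prop :=
  ∀ W : Finset V, (W ∩ R.T).Nonempty → 1 ≤ fSum f (outSet (ERext N R) (extW W))

/-- Feasibility for the integer program IP-A-CVSAP. -/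
def IPFeasible (N : Network V) (R : Request V) (x : V → ℕ) (f : ExtV V × ExtV V → ℕ) : Prop :=
  (∀ s ∈ R.S, x s ≤ 1) ∧
  IP1 N R f ∧
  IP2 N R x f ∧
  IP3 N R f ∧
  (∀ s ∈ R.S, x s ≤ f (orig s, sinkS)) ∧
  (∀ s ∈ R.S, f (orig s, sinkS) ≤ R.uS s * x s) ∧
  f (orig R.root, sinkR) ≤ R.ur ∧
  (∀ e ∈ N.E, f (orig e.1, orig e.2) ≤ N.uE e) ∧
  (∀ t ∈ R.T, f (src, orig t) = 1) ∧
  (∀ s ∈ R.S, f (src, orig s) = x s)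

/-- Objective value of IP-A-CVSAP. -/
noncomputable def costIP (N : Network V) (R : Request V) (x : V → ℕ)
    (f : ExtV V × ExtV V → ℕ) : ℝ :=
  ∑ e ∈ N.E, N.cE e * f (orig e.1, orig e.2) + ∑ s ∈ R.S, R.cS s * x s

/-- A Virtual Arborescence: nodes, virtual edges and the mapping of virtual edges
onto paths in the underlying graph. -/
structure VirtArb (V : Type) where
  VT : Finset V
  ET : Finset (V × V)
  pi : V × V → List V

/-- `p` is a simple directed path in `N` from `u` to `v`. -/
def IsPathInG (N : Network V) (p : List V) (u v : V) : Prop :=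
  p.Chain' (fun a b => (a, b) ∈ N.E) ∧ p.head? = some u ∧ p.getLast? = some v ∧ p.Nodup

/-- The virtual edges whose path uses the edge `e` of the underlying graph. -/
def pathUses (TA : VirtArb V) (e : V × V) : Finset (V × V) :=
  TA.ET.filter fun d => e ∈ (TA.pi d).zip (TA.pi d).tail

/-- `|π(E_T)[e]|`: the number of paths of the virtual arborescence using edge `e`. -/
def pathCount (TA : VirtArb V) (e : V × V) : ℕ := (pathUses TA e).card

/-- Total degree of node `v` with respect to the virtual edge set `ET`. -/
def degTotal (ET : Finset (V × V)) (v : V) : ℕ :=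
  (ET.filter fun e => e.1 = v).card + (ET.filter fun e => e.2 = v).card

/-- `(VT, ET, r)` is an arborescence rooted at `r` with all edges oriented towards `r`. -/
def ArborTowards (VT : Finset V) (ET : Finset (V × V)) (r : V) : Prop :=
  (∀ e ∈ ET, e.1 ∈ VT ∧ e.2 ∈ VT ∧ e.1 ≠ e.2) ∧
  (∀ v ∈ VT, v ≠ r → (ET.filter fun e => e.1 = v).card = 1) ∧
  (∀ e ∈ ET, e.1 ≠ r) ∧
  (∀ v ∈ VT, ∃ p : List V, p.Chain' (fun a b => (a, b) ∈ ET) ∧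
      p.head? = some v ∧ p.getLast? = some r)

/-- `(VT, ET, r)` is an arborescence rooted at `r` with all edges oriented away from `r`. -/
def ArborAway (VT : Finset V) (ET : Finset (V × V)) (r : V) : Prop :=
  (∀ e ∈ ET, e.1 ∈ VT ∧ e.2 ∈ VT ∧ e.1 ≠ e.2) ∧
  (∀ v ∈ VT, v ≠ r → (ET.filter fun e => e.2 = v).card = 1) ∧
  (∀ e ∈ ET, e.2 ≠ r) ∧
  (∀ v ∈ VT, ∃ p : List V, p.Chain' (fun a b => (a, b) ∈ ET) ∧
      p.head? = some r ∧ p.getLast? = some v)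

/-- Feasible solutions of A-CVSAP: all arborescence edges oriented towards the root. -/
def FeasibleACVSAP (N : Network V) (R : Request V) (TA : VirtArb V) : Prop :=
  R.root ∈ TA.VT ∧
  ArborTowards TA.VT TA.ET R.root ∧
  (∀ d ∈ TA.ET, IsPathInG N (TA.pi d) d.1 d.2) ∧
  R.T ⊆ TA.VT ∧
  TA.VT ⊆ insert R.root (R.S ∪ R.T) ∧
  (∀ t ∈ R.T, degTotal TA.ET t = 1) ∧
  degTotal TA.ET R.root ≤ R.ur ∧
  (∀ s ∈ R.S, s ∈ TA.VT → degTotal TA.ET s ≤ R.uS s + 1) ∧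
  (∀ e ∈ N.E, pathCount TA e ≤ N.uE e)

/-- Feasible solutions of M-CVSAP: all arborescence edges oriented away from the root. -/
def FeasibleMCVSAP (N : Network V) (R : Request V) (TA : VirtArb V) : Prop :=
  R.root ∈ TA.VT ∧
  ArborAway TA.VT TA.ET R.root ∧
  (∀ d ∈ TA.ET, IsPathInG N (TA.pi d) d.1 d.2) ∧
  R.T ⊆ TA.VT ∧
  TA.VT ⊆ insert R.root (R.S ∪ R.T) ∧
  (∀ t ∈ R.T, degTotal TA.ET t = 1) ∧
  degTotal TA.ET R.root ≤ R.ur ∧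
  (∀ s ∈ R.S, s ∈ TA.VT → degTotal TA.ET s ≤ R.uS s + 1) ∧
  (∀ e ∈ N.E, pathCount TA e ≤ N.uE e)

/-- Cost of a virtual arborescence. -/
noncomputable def costCVSAP (N : Network V) (R : Request V) (TA : VirtArb V) : ℝ :=
  ∑ e ∈ N.E, N.cE e * pathCount TA e + ∑ s ∈ R.S.filter (· ∈ TA.VT), R.cS s

/-! ### Statement 12: the directed Steiner cuts strictly strengthen the LP relaxation. -/

/-- Total (real) flow of `f` on the edge set `F`. -/
def fSumR (f : ExtV V × ExtV V → ℝ) (F : Finset (ExtV V × ExtV V)) : ℝ :=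
  ∑ e ∈ F, f e

/-- LP relaxation of IP-A-CVSAP *without* the directed Steiner cuts (IP-3). -/
def LPFeasibleNoCuts (N : Network V) (R : Request V) (x : V → ℝ)
    (f : ExtV V × ExtV V → ℝ) : Prop :=
  (∀ s ∈ R.S, 0 ≤ x s ∧ x s ≤ 1) ∧
  (∀ e : ExtV V × ExtV V, 0 ≤ f e) ∧
  (∀ e ∉ Eext N R, f e = 0) ∧
  -- (IP-1)
  (∀ v : V, fSumR f (outV (Eext N R) (ExtV.orig v)) =
    fSumR f (inV (Eext N R) (ExtV.orig v))) ∧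
  -- (IP-2)
  (∀ W : Finset V, ∀ s ∈ W, s ∈ R.S → x s ≤ fSumR f (outSet (ERext N R) (extW W))) ∧
  -- (IP-4)
  (∀ s ∈ R.S, x s ≤ f (ExtV.orig s, ExtV.sinkS)) ∧
  -- (IP-5)
  (∀ s ∈ R.S, f (ExtV.orig s, ExtV.sinkS) ≤ (R.uS s : ℝ) * x s) ∧
  -- (IP-6)
  f (ExtV.orig R.root, ExtV.sinkR) ≤ (R.ur : ℝ) ∧
  -- (IP-7)
  (∀ e ∈ N.E, f (ExtV.orig e.1, ExtV.orig e.2) ≤ (N.uE e : ℝ)) ∧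
  -- (IP-8)
  (∀ t ∈ R.T, f (ExtV.src, ExtV.orig t) = 1) ∧
  -- (IP-9)
  (∀ s ∈ R.S, f (ExtV.src, ExtV.orig s) = x s)

/-- The directed Steiner cuts (IP-3) for real flows. -/
def LPCuts (N : Network V) (R : Request V) (f : ExtV V × ExtV V → ℝ) : Prop :=
  ∀ W : Finset V, (W ∩ R.T).Nonempty → 1 ≤ fSumR f (outSet (ERext N R) (extW W))

/-- Objective value of the LP relaxation. -/
noncomputable def costLP (N : Network V) (R : Request V) (x : V → ℝ)
    (f : ExtV V × ExtV V → ℝ) : ℝ :=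
  ∑ e ∈ N.E, N.cE e * f (ExtV.orig e.1, ExtV.orig e.2) + ∑ s ∈ R.S, R.cS s * x s

/-- The example network on three nodes `r = 0`, `s = 1`, `t = 2` with edges
`(t,s)` and `(s,r)` of unit cost and capacity `10`. -/
def exNet : Network (Fin 3) where
  E := {((2 : Fin 3), (1 : Fin 3)), ((1 : Fin 3), (0 : Fin 3))}
  uE := fun _ => 10
  cE := fun _ => 1

/-- The example request: root `0`, Steiner site `1` (capacity `10`, activation cost `5`),
terminal `2`, root capacity `1`. -/
def exReq : Request (Fin 3) where
  root := 0
  S := {1}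
  T := {2}
  ur := 1
  cS := fun _ => 5
  uS := fun _ => 10

/-- The fractional LP point `x_s = 1/10`. -/
noncomputable def exx : Fin 3 → ℝ := fun v => if v = 1 then 1/10 else 0

/-- The fractional LP flow of the example. -/
noncomputable def exf : ExtV (Fin 3) × ExtV (Fin 3) → ℝ := fun e =>
  if e = (ExtV.orig 2, ExtV.orig 1) then 1
  else if e = (ExtV.orig 1, ExtV.orig 0) then 1/10
  else if e = (ExtV.src, ExtV.orig 2) then 1
  else if e = (ExtV.src, ExtV.orig 1) then 1/10
  else if e = (ExtV.orig 1, ExtV.sinkS) then 1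
  else if e = (ExtV.orig 0, ExtV.sinkR) then 1/10
  else 0


namespace SCAux
open ExtV

lemma exf_ts : exf (orig 2, orig 1) = 1 := by simp [exf]
lemma exf_sr : exf (orig 1, orig 0) = 1/10 := by simp [exf]
lemma exf_ct : exf (src, orig 2) = 1 := by simp [exf]
lemma exf_cs : exf (src, orig 1) = 1/10 := by simp [exf]
lemma exf_ss : exf (orig 1, sinkS) = 1 := by simp [exf]
lemma exf_rr : exf (orig 0, sinkR) = 1/10 := by simp [exf]

lemma hER : ERext exNet exReq =
    {(orig 2, orig 1), (orig 1, orig 0), (orig 0, sinkR), (src, orig 1), (src, orig 2)} := by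
  decide

lemma mem_extW {W : Finset (Fin 3)} {a : Fin 3} : orig a ∈ extW W ↔ a ∈ W := by simp [extW]
lemma src_not_extW {W : Finset (Fin 3)} : src ∉ extW W := by simp [extW]
lemma sinkS_not_extW {W : Finset (Fin 3)} : (sinkS : ExtV (Fin 3)) ∉ extW W := by simp [extW]
lemma sinkR_not_extW {W : Finset (Fin 3)} : (sinkR : ExtV (Fin 3)) ∉ extW W := by simp [extW]

/-- Closed form for the cut value of any `W` for the example flow. -/
lemma hcutval (W : Finset (Fin 3)) :
    fSumR exf (outSet (ERext exNet exReq) (extW W)) =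
      (if 2 ∈ W ∧ 1 ∉ W then (1:ℝ) else 0) +
      ((if 1 ∈ W ∧ 0 ∉ W then (1:ℝ)/10 else 0) + (if 0 ∈ W then (1:ℝ)/10 else 0)) := by
  rw [fSumR, outSet, hER, Finset.sum_filter]
  rw [Finset.sum_insert (by decide), Finset.sum_insert (by decide),
    Finset.sum_insert (by decide), Finset.sum_insert (by decide), Finset.sum_singleton]
  simp [mem_extW, src_not_extW, sinkR_not_extW, exf_ts, exf_sr, exf_rr]

end SCAux

open SCAux ExtV in
theorem steiner_cuts_strengthen_lp :
    (LPFeasibleNoCuts exNet exReq exx exf ∧ costLP exNet exReq exx exf = 1.6) ∧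
    (∀ (x : Fin 3 → ℝ) (f : ExtV (Fin 3) × ExtV (Fin 3) → ℝ),
        LPFeasibleNoCuts exNet exReq x f → LPCuts exNet exReq f →
          2 ≤ costLP exNet exReq x f) := by
  constructor
  · constructor
    · refine ⟨?_, ?_, ?_, ?_, ?_, ?_, ?_, ?_, ?_, ?_, ?_⟩
      · intro s hs
        have : s = 1 := by simpa [exReq] using hs
        subst this; norm_num [exx]
      · intro e; unfold exf; split_ifs <;> norm_num
      · intro e he
        unfold exf
        split_ifs with h1 h2 h3 h4 h5 h6
        · exact absurd (h1 ▸ (by decide : (orig 2, orig 1) ∈ Eext exNet exReq)) he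
        · exact absurd (h2 ▸ (by decide : (orig 1, orig 0) ∈ Eext exNet exReq)) he
        · exact absurd (h3 ▸ (by decide : ((src : ExtV (Fin 3)), orig 2) ∈ Eext exNet exReq)) he
        · exact absurd (h4 ▸ (by decide : ((src : ExtV (Fin 3)), orig 1) ∈ Eext exNet exReq)) he
        · exact absurd (h5 ▸ (by decide : (orig 1, (sinkS : ExtV (Fin 3))) ∈ Eext exNet exReq)) he
        · exact absurd (h6 ▸ (by decide : (orig 0, (sinkR : ExtV (Fin 3))) ∈ Eext exNet exReq)) he
        · rfl
      · intro v
        fin_cases v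
        · show fSumR exf (outV (Eext exNet exReq) (orig 0)) =
            fSumR exf (inV (Eext exNet exReq) (orig 0))
          rw [show outV (Eext exNet exReq) (orig 0) = {(orig 0, sinkR)} from by decide,
            show inV (Eext exNet exReq) (orig 0) = {(orig 1, orig 0)} from by decide]
          simp [fSumR, exf_rr, exf_sr]
        · show fSumR exf (outV (Eext exNet exReq) (orig 1)) =
            fSumR exf (inV (Eext exNet exReq) (orig 1))
          rw [show outV (Eext exNet exReq) (orig 1) = {(orig 1, orig 0), (orig 1, sinkS)}
              from by decide,
            show inV (Eext exNet exReq) (orig 1) = {(orig 2, orig 1), (src, orig 1)}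
              from by decide]
          rw [fSumR, fSumR, Finset.sum_pair (by decide), Finset.sum_pair (by decide)]
          rw [exf_sr, exf_ss, exf_ts, exf_cs]; ring
        · show fSumR exf (outV (Eext exNet exReq) (orig 2)) =
            fSumR exf (inV (Eext exNet exReq) (orig 2))
          rw [show outV (Eext exNet exReq) (orig 2) = {(orig 2, orig 1)} from by decide,
            show inV (Eext exNet exReq) (orig 2) = {(src, orig 2)} from by decide]
          simp [fSumR, exf_ts, exf_ct]
      · intro W s hsW hsS
        have hs1 : s = 1 := by simpa [exReq] using hsS
        subst hs1
        rw [hcutval]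
        have hx1 : exx 1 = 1/10 := by norm_num [exx]
        rw [hx1]
        by_cases h0 : (0 : Fin 3) ∈ W <;> by_cases h2 : (2 : Fin 3) ∈ W <;>
          simp [h0, h2, hsW] <;> norm_num
      · intro s hs
        have : s = 1 := by simpa [exReq] using hs
        subst this; rw [exf_ss]; norm_num [exx]
      · intro s hs
        have : s = 1 := by simpa [exReq] using hs
        subst this; rw [exf_ss]; norm_num [exx, exReq]
      · show exf (orig 0, sinkR) ≤ ((1:ℕ) : ℝ)
        rw [exf_rr]; norm_num
      · intro e he
        have : e = ((2 : Fin 3), (1 : Fin 3)) ∨ e = ((1 : Fin 3), (0 : Fin 3)) := by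
          simpa [exNet] using he
        rcases this with rfl | rfl
        · rw [show exf (orig 2, orig 1) = 1 from exf_ts]; norm_num [exNet]
        · rw [show exf (orig 1, orig 0) = 1/10 from exf_sr]; norm_num [exNet]
      · intro t ht
        have : t = 2 := by simpa [exReq] using ht
        subst this; exact exf_ct
      · intro s hs
        have : s = 1 := by simpa [exReq] using hs
        subst this; rw [exf_cs]; norm_num [exx]
    · unfold costLP
      rw [show exNet.E = {((2 : Fin 3), (1 : Fin 3)), ((1 : Fin 3), (0 : Fin 3))} from rfl,
        Finset.sum_pair (by decide),
        show exReq.S = {(1 : Fin 3)} from rfl, Finset.sum_singleton]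
      rw [exf_ts, exf_sr]
      norm_num [exNet, exReq, exx]
  · intro x f hfeas hcuts
    obtain ⟨hx, hf0, -, -, -, -, -, -, -, -, -⟩ := hfeas
    have c1 := hcuts {2} ⟨2, by decide⟩
    rw [show outSet (ERext exNet exReq) (extW {2}) = {(orig 2, orig 1)} from by decide,
      fSumR, Finset.sum_singleton] at c1
    have c2 := hcuts {1, 2} ⟨2, by decide⟩
    rw [show outSet (ERext exNet exReq) (extW {1, 2}) = {(orig 1, orig 0)} from by decide,
      fSumR, Finset.sum_singleton] at c2
    have hx1 := (hx 1 (by decide)).1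
    unfold costLP
    rw [show exNet.E = {((2 : Fin 3), (1 : Fin 3)), ((1 : Fin 3), (0 : Fin 3))} from rfl,
      Finset.sum_pair (by decide),
      show exReq.S = {(1 : Fin 3)} from rfl, Finset.sum_singleton]
    have hcE : ∀ e, exNet.cE e = 1 := fun _ => rfl
    have hcS : exReq.cS 1 = 5 := rfl
    rw [hcE, hcE, hcS]
    nlinarith [c1, c2, hx1]
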